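/- In a frame L, for any elements a, b, the Heyting implication of principal filters in the frame of filters satisfies ↑a → ↑b = {x ∈ L : b ≤ x ∨ a}. -/
import Mathlib

/-- A filter of a frame: contains ⊤, upward closed, closed under binary meets. -/
def IsFrameFilter {L : Type*} [Order.Frame L] (F : Set L) : Prop :=
  ⊤ ∈ F ∧ (∀ x ∈ F, ∀ y : L, x ≤ y → y ∈ F) ∧ ∀ x ∈ F, ∀ y ∈ F, x ⊓ y ∈ F

/-- In the frame of filters of a frame `L` (ordered by inclusion, with meet given by
intersection), the Heyting implication of principal filters satisfies
`↑a → ↑b = {x | b ≤ x ⊔ a}`: this set is a filter and it is the largest filter `G`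
with `↑a ∩ G ⊆ ↑b`. -/
theorem stmt0 {L : Type*} [Order.Frame L] (a b : L) :
    IsFrameFilter {x : L | b ≤ x ⊔ a} ∧
    ∀ G : Set L, IsFrameFilter G →
      (Set.Ici a ∩ G ⊆ Set.Ici b ↔ G ⊆ {x : L | b ≤ x ⊔ a}) := by
  constructor
  · refine ⟨by simp, ?_, ?_⟩
    · intro x hx y hxy
      exact hx.trans (sup_le_sup_right hxy a)
    · intro x hx y hy
      have : b ≤ (x ⊔ a) ⊓ (y ⊔ a) := le_inf hx hy
      simpa [sup_inf_right] using this
  · intro G ⟨htop, hup, hinf⟩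
    constructor
    · intro h g hg
      have : g ⊔ a ∈ Set.Ici a ∩ G :=
        ⟨le_sup_right, hup g hg _ le_sup_left⟩
      exact h this
    · intro h x ⟨hx1, hx2⟩
      have := h hx2
      simpa [sup_of_le_left hx1] using this
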